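/- Let h ≥ 2, p ≥ 2, m ≥ 0, and let g assign to each ℓ ∈ [m] and each i ∈ [h] an index g(ℓ,i) ∈ [p]. In the captain network G_M(h,p,m,g), the core number of every captain C_{i,j} is at least the core number of every leader l_{i'}. -/

import Mathlib

/-- The core number of a vertex `v`: the largest `k` such that `v` belongs to a subgraph
in which every vertex has degree at least `k` within that subgraph (equivalently, an
induced subgraph with minimum degree at least `k`). -/
noncomputable def coreNumber {V : Type*} (G : SimpleGraph V) (v : V) : ℕ :=
  sSup {k : ℕ | ∃ s : Set V, v ∈ s ∧ ∀ w ∈ s, k ≤ (s ∩ G.neighborSet w).ncard}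

/-- Vertices of the captain network with `h` leaders, `h` groups of `p` captains,
and `m` remaining vertices. -/
inductive CNV (h p m : ℕ) where
  | L : Fin h → CNV h p m
  | C : Fin h → Fin p → CNV h p m
  | X : Fin m → CNV h p m

/-- Generating relation of the captain network `G_M(h,p,m,g)`: the leaders form a clique,
leader `l_i` is joined to all captains of its group `C_i`, the captains form a complete
`h`-partite graph (the groups being the parts), and `x_ℓ` is joined to the captain
`C_{i,g(ℓ,i)}` of each group `i`. -/
def cnRel {h p m : ℕ} (g : Fin m → Fin h → Fin p) : CNV h p m → CNV h p m → Prop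
  | .L i, .L i' => i ≠ i'
  | .L i, .C i' _ => i = i'
  | .C i _, .C i' _ => i ≠ i'
  | .X ℓ, .C i j => j = g ℓ i
  | _, _ => False

/-- The captain network `G_M(h,p,m,g)` for multiple leaders. -/
def captainNetwork {h p m : ℕ} (g : Fin m → Fin h → Fin p) : SimpleGraph (CNV h p m) :=
  SimpleGraph.fromRel (cnRel g)

/-- `CNV h p m` is equivalent to a sum of finite types. -/
def cnvEquiv (h p m : ℕ) : CNV h p m ≃ (Fin h ⊕ Fin h × Fin p ⊕ Fin m) where
  toFun v := match v with
    | .L i => Sum.inl i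
    | .C i j => Sum.inr (Sum.inl (i, j))
    | .X ℓ => Sum.inr (Sum.inr ℓ)
  invFun v := match v with
    | Sum.inl i => .L i
    | Sum.inr (Sum.inl (i, j)) => .C i j
    | Sum.inr (Sum.inr ℓ) => .X ℓ
  left_inv v := by cases v <;> rfl
  right_inv v := by rcases v with _ | (⟨_, _⟩ | _) <;> rfl

instance {h p m : ℕ} : Finite (CNV h p m) := Finite.of_equiv _ (cnvEquiv h p m).symm

lemma coreNumber_le_of_finite {V : Type*} [Finite V] (G : SimpleGraph V) (v : V) :
    coreNumber G v ≤ (G.neighborSet v).ncard := by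
  apply csSup_le
  · exact ⟨0, {v}, Set.mem_singleton v, fun w _ => Nat.zero_le _⟩
  · rintro k ⟨s, hv, hs⟩
    exact (hs v hv).trans (Set.ncard_le_ncard Set.inter_subset_right (Set.toFinite _))

lemma le_coreNumber {V : Type*} [Finite V] (G : SimpleGraph V) (v : V) (k : ℕ)
    (hk : ∃ s : Set V, v ∈ s ∧ ∀ w ∈ s, k ≤ (s ∩ G.neighborSet w).ncard) :
    k ≤ coreNumber G v := by
  apply le_csSup
  · refine ⟨Nat.card V, ?_⟩
    rintro n ⟨s, hv, hs⟩
    calc n ≤ (s ∩ G.neighborSet v).ncard := hs v hv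
    _ ≤ (Set.univ : Set V).ncard := Set.ncard_le_ncard (Set.subset_univ _) (Set.toFinite _)
    _ = Nat.card V := Set.ncard_univ V
  · exact hk

lemma L_injective {h p m : ℕ} : Function.Injective (CNV.L (h := h) (p := p) (m := m)) := by
  intro a b hab; injection hab

lemma C_injective {h p m : ℕ} :
    Function.Injective (fun q : Fin h × Fin p => CNV.C (m := m) q.1 q.2) := by
  rintro ⟨a, b⟩ ⟨c, d⟩ hab
  injection hab with h1 h2
  simp_all

lemma ncard_range_L {h p m : ℕ} : (Set.range (CNV.L (h := h) (p := p) (m := m))).ncard = h := by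
  rw [← Nat.card_coe_set_eq, Nat.card_range_of_injective L_injective]
  simp

theorem stmt_14 {h p m : ℕ} (hh : 2 ≤ h) (hp : 2 ≤ p)
    (g : Fin m → Fin h → Fin p) :
    ∀ (i i' : Fin h) (j : Fin p),
      coreNumber (captainNetwork g) (CNV.L i') ≤
      coreNumber (captainNetwork g) (CNV.C i j) := by
  intro i i' j
  have adj : ∀ a b, (captainNetwork g).Adj a b ↔ a ≠ b ∧ (cnRel g a b ∨ cnRel g b a) :=
    fun a b => SimpleGraph.fromRel_adj _ a b
  -- Upper bound on leader core number: its degree is (h-1) + p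
  have hub : coreNumber (captainNetwork g) (CNV.L i') ≤ (h - 1) + p := by
    refine (coreNumber_le_of_finite _ _).trans ?_
    have hsub : (captainNetwork g).neighborSet (CNV.L i') ⊆
        (Set.range CNV.L \ {CNV.L i'}) ∪ Set.range (fun s => CNV.C i' s) := by
      intro b hb
      rw [SimpleGraph.mem_neighborSet, adj] at hb
      obtain ⟨hne, hrel⟩ := hb
      cases b with
      | L t => exact Or.inl ⟨⟨t, rfl⟩, fun hbt => hne hbt.symm⟩
      | C t s =>
        rcases hrel with h1 | h1
        · simp only [cnRel] at h1; subst h1; exact Or.inr ⟨s, rfl⟩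
        · simp [cnRel] at h1
      | X ℓ => rcases hrel with h1 | h1 <;> simp [cnRel] at h1
    refine (Set.ncard_le_ncard hsub (Set.toFinite _)).trans ?_
    refine (Set.ncard_union_le _ _).trans ?_
    have h1 : (Set.range CNV.L \ {CNV.L (p := p) (m := m) i'}).ncard = h - 1 := by
      rw [Set.ncard_diff_singleton_of_mem (Set.mem_range_self i'), ncard_range_L]
    have h2 : (Set.range (fun s : Fin p => CNV.C (m := m) i' s)).ncard = p := by
      rw [← Nat.card_coe_set_eq, Nat.card_range_of_injective
        (fun a b hab => by injection hab)]
      simp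
    omega
  -- Lower bound on captain core number via the set of all leaders and captains
  have hlb : (h - 1) + p ≤ coreNumber (captainNetwork g) (CNV.C i j) := by
    apply le_coreNumber
    refine ⟨Set.range CNV.L ∪ Set.range (fun q : Fin h × Fin p => CNV.C q.1 q.2),
      Or.inr ⟨(i, j), rfl⟩, ?_⟩
    rintro w (⟨t, rfl⟩ | ⟨⟨t, s⟩, rfl⟩)
    · -- leader: its neighbors in the set include all other leaders and its p captains
      have hsub : (Set.range CNV.L \ {CNV.L t}) ∪ Set.range (fun s => CNV.C t s) ⊆
          (Set.range CNV.L ∪ Set.range (fun q : Fin h × Fin p => CNV.C q.1 q.2)) ∩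
            (captainNetwork g).neighborSet (CNV.L t) := by
        rintro b (⟨⟨u, rfl⟩, hb⟩ | ⟨s, rfl⟩)
        · refine ⟨Or.inl ⟨u, rfl⟩, ?_⟩
          rw [SimpleGraph.mem_neighborSet, adj]
          have : t ≠ u := fun hq => hb (by rw [hq]; rfl)
          exact ⟨fun hq => this (L_injective hq), Or.inl this⟩
        · refine ⟨Or.inr ⟨(t, s), rfl⟩, ?_⟩
          rw [SimpleGraph.mem_neighborSet, adj]
          exact ⟨fun hq => by injection hq, Or.inl rfl⟩
      refine le_trans (le_of_eq ?_) (Set.ncard_le_ncard hsub (Set.toFinite _))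
      have hdisj : Disjoint (Set.range CNV.L \ {CNV.L (p := p) (m := m) t})
          (Set.range (fun s : Fin p => CNV.C (m := m) t s)) := by
        rw [Set.disjoint_left]
        rintro b ⟨⟨u, rfl⟩, _⟩ ⟨s, hb⟩
        injection hb
      rw [Set.ncard_union_eq hdisj (Set.toFinite _) (Set.toFinite _)]
      rw [Set.ncard_diff_singleton_of_mem (Set.mem_range_self t), ncard_range_L]
      congr 1
      rw [← Nat.card_coe_set_eq, Nat.card_range_of_injective
        (fun a b hab => by injection hab)]
      simp
    · -- captain C t s: neighbors in the set include L t and all captains of other groups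
      have hsub : ({CNV.L t} : Set (CNV h p m)) ∪
          ((fun q : Fin h × Fin p => CNV.C q.1 q.2) '' (({t}ᶜ : Set (Fin h)) ×ˢ Set.univ)) ⊆
          (Set.range CNV.L ∪ Set.range (fun q : Fin h × Fin p => CNV.C q.1 q.2)) ∩
            (captainNetwork g).neighborSet (CNV.C t s) := by
        rintro b (rfl | ⟨⟨u, r⟩, ⟨hu, -⟩, rfl⟩)
        · refine ⟨Or.inl ⟨t, rfl⟩, ?_⟩
          rw [SimpleGraph.mem_neighborSet, adj]
          exact ⟨fun hq => by injection hq, Or.inr rfl⟩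
        · refine ⟨Or.inr ⟨(u, r), rfl⟩, ?_⟩
          rw [SimpleGraph.mem_neighborSet, adj]
          have htu : t ≠ u := fun hq => hu (by simp [hq.symm])
          refine ⟨fun hq => ?_, Or.inl htu⟩
          · injection hq with h1 h2; exact htu h1
      refine le_trans ?_ (Set.ncard_le_ncard hsub (Set.toFinite _))
      have hdisj : Disjoint ({CNV.L t} : Set (CNV h p m))
          ((fun q : Fin h × Fin p => CNV.C q.1 q.2) '' (({t}ᶜ : Set (Fin h)) ×ˢ Set.univ)) := by
        rw [Set.disjoint_left]
        rintro b rfl ⟨⟨u, r⟩, -, hb⟩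
        injection hb
      rw [Set.ncard_union_eq hdisj (Set.toFinite _) (Set.toFinite _)]
      · rw [Set.ncard_singleton, Set.ncard_image_of_injective _ C_injective]
        have hcard : ((({t}ᶜ : Set (Fin h)) ×ˢ (Set.univ : Set (Fin p)))).ncard
            = (h - 1) * p := by
          rw [← Nat.card_coe_set_eq, Nat.card_congr (Equiv.Set.prod _ _),
            Nat.card_prod, Nat.card_coe_set_eq, Nat.card_coe_set_eq]
          have : ({t}ᶜ : Set (Fin h)) = Set.univ \ {t} := by ext; simp
          rw [this, Set.ncard_diff_singleton_of_mem (Set.mem_univ t), Set.ncard_univ,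
            Set.ncard_univ]
          simp
        rw [hcard]
        -- 1 + (h-1)*p ≥ (h-1) + p  since h ≥ 2, p ≥ 2
        obtain ⟨h', rfl⟩ : ∃ h', h = h' + 2 := ⟨h - 2, by omega⟩
        have : h' ≤ h' * p := Nat.le_mul_of_pos_right h' (by omega)
        have e : h' + 2 - 1 = h' + 1 := rfl
        rw [e]
        calc h' + 1 + p ≤ h' * p + 1 + p := by omega
          _ = 1 + (h' + 1) * p := by ring
  omega
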